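/- For every positive integer n, the number of integer triangles with perimeter p = 12n is T(12n) = 3n². -/

import Mathlib

/-- `T p` is the number of integer triangles with perimeter `p`:
unordered triples of positive integers `a ≤ b ≤ c` with `a + b + c = p`
and `c < a + b`. -/
noncomputable def T (p : ℕ) : ℕ :=
  Nat.card {t : ℕ × ℕ × ℕ //
    0 < t.1 ∧ t.1 ≤ t.2.1 ∧ t.2.1 ≤ t.2.2 ∧ t.2.2 < t.1 + t.2.1 ∧ t.1 + t.2.1 + t.2.2 = p}

def Bset (n : ℕ) : Finset (ℕ × ℕ) :=
  (Finset.Icc 1 (12*n)).biUnion fun b =>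
    (Finset.Icc (max 1 (6*n+1-b)) (min b (12*n-2*b))).image fun a => (a, b)

lemma mem_Bset (n : ℕ) (x : ℕ × ℕ) :
    x ∈ Bset n ↔ 1 ≤ x.1 ∧ x.1 ≤ x.2 ∧ x.1 + 2*x.2 ≤ 12*n ∧ 6*n < x.1 + x.2 := by
  obtain ⟨a, b⟩ := x
  simp only [Bset, Finset.mem_biUnion, Finset.mem_image, Finset.mem_Icc, Prod.mk.injEq]
  constructor
  · rintro ⟨b', hb', a', ⟨h1, h2⟩, rfl, rfl⟩
    omega
  · rintro ⟨h1, h2, h3, h4⟩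
    exact ⟨b, by omega, a, ⟨by omega, by omega⟩, rfl, rfl⟩

set_option maxHeartbeats 1000000 in
lemma card_Bset (n : ℕ) (hn : 0 < n) : (Bset n).card = 3 * n ^ 2 := by
  have hdisj : ∀ b1 ∈ Finset.Icc 1 (12*n), ∀ b2 ∈ Finset.Icc 1 (12*n), b1 ≠ b2 →
      Disjoint ((Finset.Icc (max 1 (6*n+1-b1)) (min b1 (12*n-2*b1))).image fun a => (a, b1))
        ((Finset.Icc (max 1 (6*n+1-b2)) (min b2 (12*n-2*b2))).image fun a => (a, b2)) := by
    intro b1 _ b2 _ hne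
    rw [Finset.disjoint_left]
    rintro ⟨x, y⟩ hx hy
    simp only [Finset.mem_image, Prod.mk.injEq] at hx hy
    obtain ⟨a1, _, rfl, rfl⟩ := hx
    obtain ⟨a2, _, _, h⟩ := hy
    exact hne h.symm
  rw [Bset, Finset.card_biUnion hdisj]
  have himg : ∀ b : ℕ, ((Finset.Icc (max 1 (6*n+1-b)) (min b (12*n-2*b))).image
      fun a => (a, b)).card = min b (12*n-2*b) + 1 - max 1 (6*n+1-b) := by
    intro b
    rw [Finset.card_image_of_injective _ (fun a a' h => congrArg Prod.fst h), Nat.card_Icc]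
  simp only [himg]
  -- now evaluate the sum
  have hIcc : Finset.Icc 1 (12*n) = Finset.Ioc 0 (12*n) := by
    rw [← Finset.Icc_add_one_left_eq_Ioc, zero_add]
  rw [hIcc]
  have split1 : (∑ b ∈ Finset.Ioc 0 (3*n), (min b (12*n-2*b) + 1 - max 1 (6*n+1-b)))
      + ∑ b ∈ Finset.Ioc (3*n) (12*n), (min b (12*n-2*b) + 1 - max 1 (6*n+1-b))
      = ∑ b ∈ Finset.Ioc 0 (12*n), (min b (12*n-2*b) + 1 - max 1 (6*n+1-b)) :=
    Finset.sum_Ioc_consecutive _ (by omega) (by omega)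
  have split2 : (∑ b ∈ Finset.Ioc (3*n) (4*n), (min b (12*n-2*b) + 1 - max 1 (6*n+1-b)))
      + ∑ b ∈ Finset.Ioc (4*n) (12*n), (min b (12*n-2*b) + 1 - max 1 (6*n+1-b))
      = ∑ b ∈ Finset.Ioc (3*n) (12*n), (min b (12*n-2*b) + 1 - max 1 (6*n+1-b)) :=
    Finset.sum_Ioc_consecutive _ (by omega) (by omega)
  have split3 : (∑ b ∈ Finset.Ioc (4*n) (6*n), (min b (12*n-2*b) + 1 - max 1 (6*n+1-b)))
      + ∑ b ∈ Finset.Ioc (6*n) (12*n), (min b (12*n-2*b) + 1 - max 1 (6*n+1-b))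
      = ∑ b ∈ Finset.Ioc (4*n) (12*n), (min b (12*n-2*b) + 1 - max 1 (6*n+1-b)) :=
    Finset.sum_Ioc_consecutive _ (by omega) (by omega)
  rw [← split1, ← split2, ← split3]
  have z1 : ∑ b ∈ Finset.Ioc 0 (3*n), (min b (12*n-2*b) + 1 - max 1 (6*n+1-b)) = 0 := by
    apply Finset.sum_eq_zero
    intro b hb
    rw [Finset.mem_Ioc] at hb
    omega
  have z4 : ∑ b ∈ Finset.Ioc (6*n) (12*n), (min b (12*n-2*b) + 1 - max 1 (6*n+1-b)) = 0 := by
    apply Finset.sum_eq_zero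
    intro b hb
    rw [Finset.mem_Ioc] at hb
    omega
  have s2 : ∑ b ∈ Finset.Ioc (3*n) (4*n), (min b (12*n-2*b) + 1 - max 1 (6*n+1-b))
      = ∑ i ∈ Finset.range n, (2*i + 2) := by
    rw [← Finset.Ico_add_one_add_one_eq_Ioc, Finset.sum_Ico_eq_sum_range]
    apply Finset.sum_congr (by congr 1; omega)
    intro i hi
    rw [Finset.mem_range] at hi
    omega
  have s3 : ∑ b ∈ Finset.Ioc (4*n) (6*n), (min b (12*n-2*b) + 1 - max 1 (6*n+1-b))
      = ∑ i ∈ Finset.range (2*n), (2*n - 1 - i) := by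
    rw [← Finset.Ico_add_one_add_one_eq_Ioc, Finset.sum_Ico_eq_sum_range]
    apply Finset.sum_congr (by congr 1; omega)
    intro i hi
    rw [Finset.mem_range] at hi
    omega
  rw [z1, z4, s2, s3]
  rw [Finset.sum_range_reflect (fun i => i) (2*n)]
  obtain ⟨k, rfl⟩ : ∃ k, n = k + 1 := ⟨n - 1, by omega⟩
  have g1 : (∑ i ∈ Finset.range (k+1), i) * 2 = (k+1) * k := by
    rw [Finset.sum_range_id_mul_two, Nat.add_sub_cancel]
  have g2 : (∑ i ∈ Finset.range (2*(k+1)), i) * 2 = (2*k+2) * (2*k+1) := by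
    rw [Finset.sum_range_id_mul_two]; congr 1
  have h2 : ∑ i ∈ Finset.range (k+1), (2*i + 2) = 2 * (∑ i ∈ Finset.range (k+1), i) + 2*(k+1) := by
    rw [Finset.sum_add_distrib, ← Finset.mul_sum, Finset.sum_const, Finset.card_range,
      smul_eq_mul]
    ring
  rw [h2]
  nlinarith [g1, g2]

theorem integer_triangles_perimeter_12n_plus_0 (n : ℕ) (hn : 0 < n) :
    T (12 * n) = 3 * n ^ 2 := by
  have e : {t : ℕ × ℕ × ℕ //
      0 < t.1 ∧ t.1 ≤ t.2.1 ∧ t.2.1 ≤ t.2.2 ∧ t.2.2 < t.1 + t.2.1 ∧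
        t.1 + t.2.1 + t.2.2 = 12 * n} ≃ {x : ℕ × ℕ // x ∈ Bset n} :=
    { toFun := fun t => ⟨(t.1.1, t.1.2.1), by
        have h := t.2
        rw [mem_Bset]
        omega⟩
      invFun := fun x => ⟨(x.1.1, x.1.2, 12*n - x.1.1 - x.1.2), by
        obtain ⟨⟨a, b⟩, hx⟩ := x
        rw [mem_Bset] at hx
        dsimp only
        omega⟩
      left_inv := fun t => by
        obtain ⟨⟨a, b, c⟩, h⟩ := t
        obtain ⟨h1, h2, h3, h4, h5⟩ := h
        apply Subtype.ext
        dsimp only at h1 h2 h3 h4 h5 ⊢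
        simp only [Prod.mk.injEq, true_and]
        omega
      right_inv := fun x => by
        apply Subtype.ext
        rfl }
  rw [T, Nat.card_congr e, Nat.card_eq_finsetCard, card_Bset n hn]
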